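/- With a₁ = σ, a₃ = (a₂, a₃), a₂ = (a₃⁻¹, a₂⁻¹)σ in Aut(T), set β₁ = a₁a₃a₁a₃⁻¹ and β₂ = a₃⁻¹a₁a₃a₁. Then β₁ = (a₃a₂⁻¹, a₂a₃⁻¹) and β₂ = (a₂⁻¹a₃, a₃⁻¹a₂), and the closed subgroup generated by β₁, β₂ is normal in G = ⟨⟨a₁, a₃⟩⟩ and equals the closure of the commutator subgroup of G. -/

import Mathlib

open Equiv

/-- Vertices of the infinite rooted binary tree: finite words over `Bool`.
The parent of a nonempty word is `dropLast`. -/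
abbrev Wd := List Bool

/-- The group `Ω = Aut(T)` of automorphisms of the infinite rooted binary tree,
realized as the subgroup of permutations of the vertex set preserving length
(levels) and the parent relation. -/
def OmegaSG : Subgroup (Equiv.Perm Wd) where
  carrier := {σ | (∀ w, (σ w).length = w.length) ∧ ∀ w, (σ w).dropLast = σ w.dropLast}
  one_mem' := ⟨fun _ => rfl, fun _ => rfl⟩
  mul_mem' := by
    rintro σ τ ⟨hσl, hσd⟩ ⟨hτl, hτd⟩
    refine ⟨fun w => ?_, fun w => ?_⟩
    · simp [Equiv.Perm.mul_apply, hσl, hτl]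
    · simp [Equiv.Perm.mul_apply, hσd, hτd]
  inv_mem' := by
    rintro σ ⟨hl, hd⟩
    refine ⟨fun w => ?_, fun w => ?_⟩
    · have := hl (σ⁻¹ w)
      rw [show σ (σ⁻¹ w) = w from σ.apply_symm_apply w] at this
      exact this.symm
    · apply σ.injective
      have := hd (σ⁻¹ w)
      rw [show σ (σ⁻¹ w) = w from σ.apply_symm_apply w] at this
      rw [← this]
      simp

/-- The section pairing: `(u,v)` acts as `u` on the subtree rooted at `false`
and as `v` on the subtree rooted at `true`. -/
def pairFun (f g : Wd → Wd) : Wd → Wd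
  | [] => []
  | false :: w => false :: f w
  | true :: w => true :: g w

@[simp] lemma pairFun_nil (f g : Wd → Wd) : pairFun f g [] = [] := rfl
@[simp] lemma pairFun_false (f g : Wd → Wd) (w : Wd) :
    pairFun f g (false :: w) = false :: f w := rfl
@[simp] lemma pairFun_true (f g : Wd → Wd) (w : Wd) :
    pairFun f g (true :: w) = true :: g w := rfl

lemma pairFun_comp (f g f' g' : Wd → Wd) (hf : ∀ w, f (f' w) = w) (hg : ∀ w, g (g' w) = w) :
    ∀ w, pairFun f g (pairFun f' g' w) = w := by
  rintro (_ | ⟨(_|_), w⟩) <;> simp [hf, hg]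

/-- The permutation `(u,v)` of the tree. -/
def pairPerm (u v : Equiv.Perm Wd) : Equiv.Perm Wd where
  toFun := pairFun u v
  invFun := pairFun u.symm v.symm
  left_inv := pairFun_comp _ _ _ _ (fun w => u.symm_apply_apply w) (fun w => v.symm_apply_apply w)
  right_inv := pairFun_comp _ _ _ _ (fun w => u.apply_symm_apply w) (fun w => v.apply_symm_apply w)

@[simp] lemma pairPerm_apply (u v : Equiv.Perm Wd) (w : Wd) :
    pairPerm u v w = pairFun u v w := rfl

/-- The first-level swap `σ`. -/
def swapPerm : Equiv.Perm Wd where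
  toFun w := match w with | [] => [] | b :: w => (!b) :: w
  invFun w := match w with | [] => [] | b :: w => (!b) :: w
  left_inv := by rintro (_ | ⟨b, w⟩) <;> simp
  right_inv := by rintro (_ | ⟨b, w⟩) <;> simp

@[simp] lemma swapPerm_nil : swapPerm [] = [] := rfl
@[simp] lemma swapPerm_cons (b : Bool) (w : Wd) : swapPerm (b :: w) = (!b) :: w := rfl

lemma swapPerm_mem : swapPerm ∈ OmegaSG := by
  constructor
  · rintro (_ | ⟨b, w⟩) <;> simp
  · rintro (_ | ⟨b, w⟩)
    · simp
    · rcases eq_or_ne w [] with rfl | hw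
      · simp
      · simp only [swapPerm_cons, List.dropLast_cons_of_ne_nil hw]

lemma mem_omega_length {u : Equiv.Perm Wd} (hu : u ∈ OmegaSG) (w : Wd) :
    (u w).length = w.length := hu.1 w

lemma mem_omega_ne_nil {u : Equiv.Perm Wd} (hu : u ∈ OmegaSG) {w : Wd} (hw : w ≠ []) :
    u w ≠ [] := by
  intro h
  exact hw (List.eq_nil_of_length_eq_zero (by rw [← hu.1 w, h]; rfl))

lemma mem_omega_nil {u : Equiv.Perm Wd} (hu : u ∈ OmegaSG) : u [] = [] :=
  List.eq_nil_of_length_eq_zero (hu.1 [])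

lemma pairPerm_mem {u v : Equiv.Perm Wd} (hu : u ∈ OmegaSG) (hv : v ∈ OmegaSG) :
    pairPerm u v ∈ OmegaSG := by
  constructor
  · rintro (_ | ⟨(_|_), w⟩) <;> simp [hu.1, hv.1]
  · rintro (_ | ⟨(_|_), w⟩)
    · simp
    · rcases eq_or_ne w [] with rfl | hw
      · simp [mem_omega_nil hu]
      · simp only [pairPerm_apply, pairFun_false, List.dropLast_cons_of_ne_nil hw,
          List.dropLast_cons_of_ne_nil (mem_omega_ne_nil hu hw)]
        rw [hu.2]
    · rcases eq_or_ne w [] with rfl | hw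
      · simp [mem_omega_nil hv]
      · simp only [pairPerm_apply, pairFun_true, List.dropLast_cons_of_ne_nil hw,
          List.dropLast_cons_of_ne_nil (mem_omega_ne_nil hv hw)]
        rw [hv.2]

/-- `(u,v)` as an element of `Ω`. -/
def pairOm (u v : OmegaSG) : OmegaSG := ⟨pairPerm u.1 v.1, pairPerm_mem u.2 v.2⟩

/-- `σ` as an element of `Ω`. -/
def swapOm : OmegaSG := ⟨swapPerm, swapPerm_mem⟩

/-! ### Levels, restriction, sign, odometers -/

/-- Level `n` of the tree: words of length `n`. -/
abbrev Lv (n : ℕ) := {w : Wd // w.length = n}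

instance fintypeLv (n : ℕ) : Fintype (Lv n) := by
  apply Fintype.ofSurjective (fun g : Fin n → Bool => (⟨List.ofFn g, List.length_ofFn⟩ : Lv n))
  rintro ⟨w, rfl⟩
  exact ⟨w.get, Subtype.ext (List.ofFn_get w)⟩

/-- The permutation induced by `g ∈ Ω` on level `n`. -/
def levelPerm (n : ℕ) (g : OmegaSG) : Equiv.Perm (Lv n) where
  toFun w := ⟨g.1 w.1, by rw [mem_omega_length g.2, w.2]⟩
  invFun w := ⟨(g⁻¹ : OmegaSG).1 w.1, by rw [mem_omega_length (g⁻¹ : OmegaSG).2, w.2]⟩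
  left_inv w := Subtype.ext (by simp)
  right_inv w := Subtype.ext (by simp)

/-- Restriction to level `n` as a group homomorphism. -/
def levelHom (n : ℕ) : OmegaSG →* Equiv.Perm (Lv n) where
  toFun := levelPerm n
  map_one' := Equiv.ext fun w => Subtype.ext rfl
  map_mul' g h := Equiv.ext fun w => Subtype.ext rfl

/-- `sgn_n`: the sign of the permutation induced on level `n`. -/
noncomputable def sgn (n : ℕ) (g : OmegaSG) : ℤˣ := Equiv.Perm.sign (levelPerm n g)

/-- An odometer: an element acting transitively on every level of the tree. -/
def IsOdometer (g : OmegaSG) : Prop :=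
  ∀ n : ℕ, ∀ v w : Lv n, ∃ k : ℤ, ((g ^ k : OmegaSG) : Equiv.Perm Wd) v.1 = w.1

/-! ### The profinite topology on `Aut(T)` -/

instance : TopologicalSpace Wd := ⊥
instance : DiscreteTopology Wd := ⟨rfl⟩
instance : TopologicalSpace (Equiv.Perm Wd) :=
  TopologicalSpace.induced (fun g => (g : Wd → Wd)) Pi.topologicalSpace

lemma continuous_permCoe : Continuous (fun g : Equiv.Perm Wd => (g : Wd → Wd)) :=
  continuous_induced_dom

lemma continuous_permApply (w : Wd) : Continuous fun g : Equiv.Perm Wd => g w :=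
  (continuous_apply w).comp continuous_permCoe

instance : IsTopologicalGroup (Equiv.Perm Wd) where
  continuous_mul := by
    apply continuous_induced_rng.2
    apply continuous_pi
    intro w
    rw [continuous_discrete_rng]
    intro y
    have h : (fun p : Equiv.Perm Wd × Equiv.Perm Wd => ((p.1 * p.2 : Equiv.Perm Wd) : Wd → Wd) w) ⁻¹' {y}
        = ⋃ x : Wd, {p : Equiv.Perm Wd × Equiv.Perm Wd | p.2 w = x} ∩ {p | p.1 x = y} := by
      ext p
      simp only [Set.mem_preimage, Set.mem_singleton_iff, Set.mem_iUnion, Set.mem_inter_iff,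
        Set.mem_setOf_eq, Equiv.Perm.mul_apply]
      constructor
      · intro hh; exact ⟨p.2 w, rfl, hh⟩
      · rintro ⟨x, rfl, hh⟩; exact hh
    show IsOpen ((fun p : Equiv.Perm Wd × Equiv.Perm Wd =>
      ((p.1 * p.2 : Equiv.Perm Wd) : Wd → Wd) w) ⁻¹' {y})
    rw [h]
    refine isOpen_iUnion fun x => IsOpen.inter ?_ ?_
    · exact IsOpen.preimage ((continuous_permApply w).comp continuous_snd) (isOpen_discrete {x})
    · exact IsOpen.preimage ((continuous_permApply x).comp continuous_fst) (isOpen_discrete {y})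
  continuous_inv := by
    apply continuous_induced_rng.2
    apply continuous_pi
    intro w
    rw [continuous_discrete_rng]
    intro y
    have h : (fun g : Equiv.Perm Wd => ((g⁻¹ : Equiv.Perm Wd) : Wd → Wd) w) ⁻¹' {y}
        = {g : Equiv.Perm Wd | g y = w} := by
      ext g
      simp only [Set.mem_preimage, Set.mem_singleton_iff, Set.mem_setOf_eq]
      constructor
      · rintro rfl; simp
      · intro hh; rw [← hh]; simp
    show IsOpen ((fun g : Equiv.Perm Wd => ((g⁻¹ : Equiv.Perm Wd) : Wd → Wd) w) ⁻¹' {y})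
    rw [h]
    exact IsOpen.preimage (continuous_permApply y) (isOpen_discrete {w})

/-! ### The recursive generators `a₁ = σ`, `a₂ = (a₃⁻¹, a₂⁻¹)σ`, `a₃ = (a₂, a₃)` -/

mutual
  /-- The underlying function of `a₂`. -/
  def pA : Wd → Wd
    | [] => []
    | false :: w => true :: piA w
    | true :: w => false :: qiA w
  /-- The underlying function of `a₃`. -/
  def qA : Wd → Wd
    | [] => []
    | false :: w => false :: pA w
    | true :: w => true :: qA w
  /-- The underlying function of `a₂⁻¹`. -/
  def piA : Wd → Wd
    | [] => []
    | false :: w => true :: qA w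
    | true :: w => false :: pA w
  /-- The underlying function of `a₃⁻¹`. -/
  def qiA : Wd → Wd
    | [] => []
    | false :: w => false :: piA w
    | true :: w => true :: qiA w
end

lemma a_inv_lemma : ∀ w : Wd, pA (piA w) = w ∧ piA (pA w) = w ∧ qA (qiA w) = w ∧ qiA (qA w) = w := by
  intro w
  induction w with
  | nil => simp [pA, qA, piA, qiA]
  | cons b w ih =>
    cases b <;>
      simp [pA, qA, piA, qiA, ih.1, ih.2.1, ih.2.2.1, ih.2.2.2]

/-- The generator `a₂`. -/
def a2 : Equiv.Perm Wd where
  toFun := pA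
  invFun := piA
  left_inv w := (a_inv_lemma w).2.1
  right_inv w := (a_inv_lemma w).1

/-- The generator `a₃`. -/
def a3 : Equiv.Perm Wd where
  toFun := qA
  invFun := qiA
  left_inv w := (a_inv_lemma w).2.2.2
  right_inv w := (a_inv_lemma w).2.2.1

lemma a_length_lemma : ∀ w : Wd, (pA w).length = w.length ∧ (qA w).length = w.length ∧
    (piA w).length = w.length ∧ (qiA w).length = w.length := by
  intro w
  induction w with
  | nil => simp [pA, qA, piA, qiA]
  | cons b w ih =>
    cases b <;>
      simp [pA, qA, piA, qiA, ih.1, ih.2.1, ih.2.2.1, ih.2.2.2]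

lemma a_ne_nil {f : Wd → Wd} (hf : ∀ w : Wd, (f w).length = w.length) {w : Wd} (hw : w ≠ []) :
    f w ≠ [] := by
  intro h
  exact hw (List.eq_nil_of_length_eq_zero (by rw [← hf w, h]; rfl))

lemma a_dropLast_lemma : ∀ w : Wd, (pA w).dropLast = pA w.dropLast ∧
    (qA w).dropLast = qA w.dropLast ∧ (piA w).dropLast = piA w.dropLast ∧
    (qiA w).dropLast = qiA w.dropLast := by
  intro w
  induction w with
  | nil => simp [pA, qA, piA, qiA]
  | cons b w ih =>
    rcases eq_or_ne w [] with rfl | hw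
    · cases b <;> simp [pA, qA, piA, qiA]
    · have hp := a_ne_nil (fun w => (a_length_lemma w).1) hw
      have hq := a_ne_nil (fun w => (a_length_lemma w).2.1) hw
      have hpi := a_ne_nil (fun w => (a_length_lemma w).2.2.1) hw
      have hqi := a_ne_nil (fun w => (a_length_lemma w).2.2.2) hw
      cases b <;>
        simp [pA, qA, piA, qiA, List.dropLast_cons_of_ne_nil hw,
          List.dropLast_cons_of_ne_nil hp, List.dropLast_cons_of_ne_nil hq,
          List.dropLast_cons_of_ne_nil hpi, List.dropLast_cons_of_ne_nil hqi,
          ih.1, ih.2.1, ih.2.2.1, ih.2.2.2]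

lemma a2_mem : a2 ∈ OmegaSG :=
  ⟨fun w => (a_length_lemma w).1, fun w => (a_dropLast_lemma w).1⟩

lemma a3_mem : a3 ∈ OmegaSG :=
  ⟨fun w => (a_length_lemma w).2.1, fun w => (a_dropLast_lemma w).2.1⟩

/-- `a₁ = σ` as an element of `Ω`. -/
def A1 : OmegaSG := swapOm
/-- `a₂` as an element of `Ω`. -/
def A2 : OmegaSG := ⟨a2, a2_mem⟩
/-- `a₃` as an element of `Ω`. -/
def A3 : OmegaSG := ⟨a3, a3_mem⟩

/-- `G = ⟨⟨a₁, a₃⟩⟩`, the topological closure of the subgroup generated by `a₁` and `a₃`: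
a model of the geometric iterated monodromy group of `f(x) = 2/(x-1)²`. -/
noncomputable def Ggrp : Subgroup OmegaSG :=
  (Subgroup.closure {A1, A3}).topologicalClosure

/-- The normal closure in `G` of the closed subgroup generated by an element `c`:
the closed subgroup generated by all `G`-conjugates of `c`. -/
noncomputable def nclG (c : OmegaSG) : Subgroup OmegaSG :=
  (Subgroup.closure {x | ∃ g ∈ Ggrp, x = g * c * g⁻¹}).topologicalClosure

/-- `U`, the normal closure in `G` of `⟨⟨a₂a₃⁻¹⟩⟩`. -/
noncomputable def Ugrp : Subgroup OmegaSG := nclG (A2 * A3⁻¹)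

/-- `H₁`, the normal closure in `G` of `⟨⟨a₁⟩⟩`. -/
noncomputable def H1grp : Subgroup OmegaSG := nclG A1

/-- `H₃`, the normal closure in `G` of `⟨⟨a₃⟩⟩`. -/
noncomputable def H3grp : Subgroup OmegaSG := nclG A3

/-- `N = ⟨⟨β₁, β₂⟩⟩` where `β₁ = a₁a₃a₁a₃⁻¹` and `β₂ = a₃⁻¹a₁a₃a₁`. -/
noncomputable def Ngrp : Subgroup OmegaSG :=
  (Subgroup.closure {A1 * A3 * A1 * A3⁻¹, A3⁻¹ * A1 * A3 * A1}).topologicalClosure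


section Stmt6Aux

open scoped commutatorElement

/-! #### Application lemmas for the generators -/

lemma a3_apply_nil : a3 [] = [] := rfl
lemma a3_apply_false (w : Wd) : a3 (false :: w) = false :: pA w := rfl
lemma a3_apply_true (w : Wd) : a3 (true :: w) = true :: qA w := rfl
lemma a3_inv_apply_nil : a3⁻¹ [] = [] := rfl
lemma a3_inv_apply_false (w : Wd) : a3⁻¹ (false :: w) = false :: piA w := rfl
lemma a3_inv_apply_true (w : Wd) : a3⁻¹ (true :: w) = true :: qiA w := rfl

lemma pA_piA (w : Wd) : pA (piA w) = w := (a_inv_lemma w).1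
lemma piA_pA (w : Wd) : piA (pA w) = w := (a_inv_lemma w).2.1
lemma qA_qiA (w : Wd) : qA (qiA w) = w := (a_inv_lemma w).2.2.1
lemma qiA_qA (w : Wd) : qiA (qA w) = w := (a_inv_lemma w).2.2.2

/-! #### The relations `a₁² = 1`, `a₃⁴ = 1`, `(a₃a₁)² = (a₁a₃⁻¹)²` -/

lemma hA1 : A1 * A1 = 1 := by
  apply Subtype.ext; apply Equiv.ext
  rintro (_ | ⟨(_|_), w⟩) <;> rfl

lemma hA1i : A1⁻¹ = A1 := inv_eq_of_mul_eq_one_right hA1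

lemma qipi2 : ∀ w : Wd, qiA (piA (qiA (piA w))) = w := by
  rintro (_ | ⟨(_|_), w⟩) <;>
    simp [pA, qA, piA, qiA, pA_piA, piA_pA, qA_qiA, qiA_qA]

lemma piqi2 : ∀ w : Wd, piA (qiA (piA (qiA w))) = w := by
  rintro (_ | ⟨(_|_), w⟩) <;>
    simp [pA, qA, piA, qiA, pA_piA, piA_pA, qA_qiA, qiA_qA]

lemma p4 : ∀ w : Wd, pA (pA (pA (pA w))) = w := by
  rintro (_ | ⟨(_|_), w⟩) <;> simp [pA, qA, piA, qiA, qipi2, piqi2]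

lemma q4 : ∀ w : Wd, qA (qA (qA (qA w))) = w := by
  intro w
  induction w with
  | nil => rfl
  | cons b w ih => cases b <;> simp [qA, p4, ih]

lemma hA3 : A3 * A3 * A3 * A3 = 1 := by
  apply Subtype.ext; apply Equiv.ext
  intro w
  exact q4 w

lemma key : A3 * A1 * A3 * A1 = A1 * A3⁻¹ * A1 * A3⁻¹ := by
  apply Subtype.ext; apply Equiv.ext
  rintro (_ | ⟨(_|_), (_ | ⟨(_|_), v⟩)⟩) <;>
    simp [Equiv.Perm.mul_apply, A1, A3, swapOm, a3_apply_nil, a3_apply_false, a3_apply_true,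
      a3_inv_apply_nil, a3_inv_apply_false, a3_inv_apply_true, pA, qA, piA, qiA,
      pA_piA, piA_pA, qA_qiA, qiA_qA]

/-! #### Conjugation of `β₁, β₂` by the generators -/

lemma C1 : A1 * (A1*A3*A1*A3⁻¹) * A1⁻¹ = (A1*A3*A1*A3⁻¹)⁻¹ := by
  have m1 : ∀ x : OmegaSG, A1 * (A1 * x) = x := fun x => by rw [← mul_assoc, hA1, one_mul]
  simp [mul_inv_rev, hA1i, mul_assoc, m1, hA1]

lemma C2 : A1 * (A3⁻¹*A1*A3*A1) * A1⁻¹ = (A3⁻¹*A1*A3*A1)⁻¹ := by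
  have m1 : ∀ x : OmegaSG, A1 * (A1 * x) = x := fun x => by rw [← mul_assoc, hA1, one_mul]
  simp [mul_inv_rev, hA1i, mul_assoc, m1, hA1]

lemma C4 : A3 * (A3⁻¹*A1*A3*A1) * A3⁻¹ = A1*A3*A1*A3⁻¹ := by
  simp [mul_assoc]

lemma C3 : A3 * (A1*A3*A1*A3⁻¹) * A3⁻¹ = (A3⁻¹*A1*A3*A1)⁻¹ := by
  have k' : ∀ x : OmegaSG, A3*(A1*(A3*(A1*x))) = A1*(A3⁻¹*(A1*(A3⁻¹*x))) := fun x => by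
    have := congrArg (fun y => y * x) key
    simpa [mul_assoc] using this
  have i3' : A3⁻¹*(A3⁻¹*A3⁻¹) = A3 := by
    have h : A3 * (A3*(A3*A3)) = 1 := by simpa [mul_assoc] using hA3
    have h2 := inv_eq_of_mul_eq_one_left h
    simpa [mul_inv_rev, mul_assoc] using h2
  simp only [mul_assoc, mul_inv_rev, hA1i, inv_inv]
  rw [k', i3']

/-! #### Membership facts -/

lemma isClosed_N : IsClosed (Ngrp : Set OmegaSG) := Subgroup.isClosed_topologicalClosure _
lemma isClosed_G : IsClosed (Ggrp : Set OmegaSG) := Subgroup.isClosed_topologicalClosure _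

lemma b1_mem_N : A1*A3*A1*A3⁻¹ ∈ Ngrp :=
  Subgroup.le_topologicalClosure _ (Subgroup.subset_closure (by simp))

lemma b2_mem_N : A3⁻¹*A1*A3*A1 ∈ Ngrp :=
  Subgroup.le_topologicalClosure _ (Subgroup.subset_closure (by simp))

lemma A1_mem_G : A1 ∈ Ggrp :=
  Subgroup.le_topologicalClosure _ (Subgroup.subset_closure (by simp))

lemma A3_mem_G : A3 ∈ Ggrp :=
  Subgroup.le_topologicalClosure _ (Subgroup.subset_closure (by simp))

lemma N_le_G : Ngrp ≤ Ggrp := by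
  apply Subgroup.topologicalClosure_minimal
  · rw [Subgroup.closure_le]
    rintro y hy
    simp only [Set.mem_insert_iff, Set.mem_singleton_iff] at hy
    rcases hy with rfl | rfl
    · exact mul_mem (mul_mem (mul_mem A1_mem_G A3_mem_G) A1_mem_G) (inv_mem A3_mem_G)
    · exact mul_mem (mul_mem (mul_mem (inv_mem A3_mem_G) A1_mem_G) A3_mem_G) A1_mem_G
  · exact isClosed_G

/-! #### Conjugation-invariance of `N` -/

lemma conj_pres (g : OmegaSG) (h1 : g*(A1*A3*A1*A3⁻¹)*g⁻¹ ∈ Ngrp)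
    (h2 : g*(A3⁻¹*A1*A3*A1)*g⁻¹ ∈ Ngrp) : ∀ x ∈ Ngrp, g*x*g⁻¹ ∈ Ngrp := by
  intro x hx
  have hcont : Continuous fun y : OmegaSG => g*y*g⁻¹ :=
    (continuous_const.mul continuous_id).mul continuous_const
  let φ : OmegaSG →* OmegaSG := (MulAut.conj g).toMonoidHom
  have hφ : ∀ y, φ y = g*y*g⁻¹ := fun y => rfl
  have hle : Ngrp ≤ Subgroup.comap φ Ngrp := by
    apply Subgroup.topologicalClosure_minimal
    · rw [Subgroup.closure_le]
      rintro y hy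
      simp only [Set.mem_insert_iff, Set.mem_singleton_iff] at hy
      rcases hy with rfl | rfl
      · simpa [Subgroup.mem_comap, hφ] using h1
      · simpa [Subgroup.mem_comap, hφ] using h2
    · have : (Subgroup.comap φ Ngrp : Set OmegaSG) = (fun y => g*y*g⁻¹) ⁻¹' (Ngrp : Set OmegaSG) := by
        ext y; simp [Subgroup.mem_comap, hφ]
      rw [this]
      exact IsClosed.preimage hcont isClosed_N
  simpa [Subgroup.mem_comap, hφ] using hle hx

lemma conjA1 : ∀ x ∈ Ngrp, A1 * x * A1⁻¹ ∈ Ngrp := by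
  apply conj_pres
  · rw [C1]; exact inv_mem b1_mem_N
  · rw [C2]; exact inv_mem b2_mem_N

lemma conjA3 : ∀ x ∈ Ngrp, A3 * x * A3⁻¹ ∈ Ngrp := by
  apply conj_pres
  · rw [C3]; exact inv_mem b2_mem_N
  · rw [C4]; exact b1_mem_N

lemma conjA3i : ∀ x ∈ Ngrp, A3⁻¹ * x * (A3⁻¹)⁻¹ ∈ Ngrp := by
  apply conj_pres
  · have h : A3⁻¹ * (A1*A3*A1*A3⁻¹) * (A3⁻¹)⁻¹ = A3⁻¹*A1*A3*A1 := by
      rw [inv_inv, ← C4]; simp [mul_assoc]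
    rw [h]; exact b2_mem_N
  · have h : A3⁻¹ * (A3⁻¹*A1*A3*A1) * (A3⁻¹)⁻¹ = (A1*A3*A1*A3⁻¹)⁻¹ := by
      rw [inv_inv]
      apply inv_injective
      rw [show (A3⁻¹ * (A3⁻¹*A1*A3*A1) * A3)⁻¹ = A3⁻¹ * ((A3⁻¹*A1*A3*A1)⁻¹) * A3 by
          simp [mul_inv_rev, mul_assoc], ← C3]
      simp [mul_assoc]
    rw [h]; exact inv_mem b1_mem_N

/-- Part 4: `N` is normalized by `G`. -/
lemma normal4 : ∀ g ∈ Ggrp, ∀ x ∈ Ngrp, g * x * g⁻¹ ∈ Ngrp := by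
  have step : ∀ g ∈ Subgroup.closure ({A1, A3} : Set OmegaSG),
      (∀ x ∈ Ngrp, g*x*g⁻¹ ∈ Ngrp) ∧ (∀ x ∈ Ngrp, g⁻¹*x*g ∈ Ngrp) := by
    intro g hg
    refine Subgroup.closure_induction ?_ ?_ ?_ ?_ hg
    · rintro y hy
      simp only [Set.mem_insert_iff, Set.mem_singleton_iff] at hy
      rcases hy with rfl | rfl
      · exact ⟨conjA1, by
          intro x hx
          have := conjA1 x hx
          rwa [hA1i]⟩
      · refine ⟨conjA3, ?_⟩
        intro x hx
        have := conjA3i x hx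
        rwa [inv_inv] at this
    · exact ⟨fun x hx => by simpa using hx, fun x hx => by simpa using hx⟩
    · rintro y z _ _ ⟨hy1, hy2⟩ ⟨hz1, hz2⟩
      constructor
      · intro x hx
        have := hy1 _ (hz1 x hx)
        rwa [show y*(z*x*z⁻¹)*y⁻¹ = (y*z)*x*(y*z)⁻¹ by group] at this
      · intro x hx
        have := hz2 _ (hy2 x hx)
        rwa [show z⁻¹*(y⁻¹*x*y)*z = (y*z)⁻¹*x*(y*z) by group] at this
    · rintro y _ ⟨hy1, hy2⟩
      refine ⟨fun x hx => by simpa using hy2 x hx, fun x hx => by simpa using hy1 x hx⟩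
  have hSclosed : IsClosed {g : OmegaSG | ∀ x ∈ Ngrp, (g*x*g⁻¹ ∈ Ngrp) ∧ (g⁻¹*x*g ∈ Ngrp)} := by
    have : {g : OmegaSG | ∀ x ∈ Ngrp, (g*x*g⁻¹ ∈ Ngrp) ∧ (g⁻¹*x*g ∈ Ngrp)}
        = ⋂ x ∈ (Ngrp : Set OmegaSG),
            (((fun g : OmegaSG => g*x*g⁻¹) ⁻¹' (Ngrp : Set OmegaSG)) ∩
             ((fun g : OmegaSG => g⁻¹*x*g) ⁻¹' (Ngrp : Set OmegaSG))) := by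
      ext g
      simp only [Set.mem_setOf_eq, Set.mem_iInter, Set.mem_inter_iff, Set.mem_preimage,
        SetLike.mem_coe]
    rw [this]
    refine isClosed_biInter fun x _ => IsClosed.inter ?_ ?_
    · exact IsClosed.preimage (((continuous_id.mul continuous_const).mul continuous_inv)) isClosed_N
    · exact IsClosed.preimage (((continuous_inv.mul continuous_const).mul continuous_id)) isClosed_N
  intro g hg
  have hsub : (Ggrp : Set OmegaSG) ⊆
      {g : OmegaSG | ∀ x ∈ Ngrp, (g*x*g⁻¹ ∈ Ngrp) ∧ (g⁻¹*x*g ∈ Ngrp)} := by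
    have hcoe : (Ggrp : Set OmegaSG) = closure ((Subgroup.closure ({A1, A3} : Set OmegaSG)) : Set OmegaSG) :=
      rfl
    rw [hcoe]
    exact closure_minimal (fun y hy x hx => ⟨(step y hy).1 x hx, (step y hy).2 x hx⟩) hSclosed
  exact fun x hx => (hsub hg x hx).1

/-! #### Commutators of `G` lie in `N` -/

lemma Hle : Subgroup.closure ({A1, A3} : Set OmegaSG) ≤ Ggrp :=
  Subgroup.le_topologicalClosure _

lemma comm_b1 : ⁅A1, A3⁆ ∈ Ngrp := by
  rw [commutatorElement_def, hA1i]
  exact b1_mem_N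

lemma comm_inner (g : OmegaSG) (hg : g ∈ Ggrp) (h1 : ⁅g, A1⁆ ∈ Ngrp) (h3 : ⁅g, A3⁆ ∈ Ngrp) :
    ∀ h ∈ Subgroup.closure ({A1, A3} : Set OmegaSG), ⁅g, h⁆ ∈ Ngrp := by
  intro h hh
  refine Subgroup.closure_induction ?_ ?_ ?_ ?_ hh
  · rintro y hy
    simp only [Set.mem_insert_iff, Set.mem_singleton_iff] at hy
    rcases hy with rfl | rfl
    · exact h1
    · exact h3
  · simpa using one_mem Ngrp
  · rintro y z hy hz ihy ihz
    have e : ⁅g, y*z⁆ = ⁅g, y⁆ * (y * ⁅g, z⁆ * y⁻¹) := by group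
    rw [e]
    exact mul_mem ihy (normal4 y (Hle hy) _ ihz)
  · rintro y hy ihy
    have e : ⁅g, y⁻¹⁆ = y⁻¹ * ⁅g, y⁆⁻¹ * (y⁻¹)⁻¹ := by group
    rw [e]
    exact normal4 y⁻¹ (inv_mem (Hle hy)) _ (inv_mem ihy)

lemma comm_HH : ∀ g ∈ Subgroup.closure ({A1, A3} : Set OmegaSG),
    ∀ h ∈ Subgroup.closure ({A1, A3} : Set OmegaSG), ⁅g, h⁆ ∈ Ngrp := by
  intro g hg
  refine Subgroup.closure_induction ?_ ?_ ?_ ?_ hg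
  · rintro y hy
    simp only [Set.mem_insert_iff, Set.mem_singleton_iff] at hy
    rcases hy with rfl | rfl
    · refine comm_inner A1 A1_mem_G ?_ comm_b1
      simpa using one_mem Ngrp
    · refine comm_inner A3 A3_mem_G ?_ ?_
      · rw [← commutatorElement_inv]
        exact inv_mem comm_b1
      · simpa using one_mem Ngrp
  · intro h hh
    simpa using one_mem Ngrp
  · rintro y z hy hz ihy ihz h hh
    have e : ⁅y*z, h⁆ = (y * ⁅z, h⁆ * y⁻¹) * ⁅y, h⁆ := by group
    rw [e]
    exact mul_mem (normal4 y (Hle hy) _ (ihz h hh)) (ihy h hh)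
  · rintro y hy ihy h hh
    have e : ⁅y⁻¹, h⁆ = y⁻¹ * ⁅y, h⁆⁻¹ * (y⁻¹)⁻¹ := by group
    rw [e]
    exact normal4 y⁻¹ (inv_mem (Hle hy)) _ (inv_mem (ihy h hh))

lemma comm_GG : ∀ g ∈ Ggrp, ∀ h ∈ Ggrp, ⁅g, h⁆ ∈ Ngrp := by
  have L2 : ∀ h ∈ Subgroup.closure ({A1, A3} : Set OmegaSG), ∀ g ∈ Ggrp, ⁅g, h⁆ ∈ Ngrp := by
    intro h hh g hg
    have hc : IsClosed {g : OmegaSG | ⁅g, h⁆ ∈ Ngrp} := by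
      have : {g : OmegaSG | ⁅g, h⁆ ∈ Ngrp}
          = (fun g : OmegaSG => g*h*g⁻¹*h⁻¹) ⁻¹' (Ngrp : Set OmegaSG) := by
        ext y; simp [commutatorElement_def]
      rw [this]
      exact IsClosed.preimage
        (((continuous_id.mul continuous_const).mul continuous_inv).mul continuous_const) isClosed_N
    have hsub : (Ggrp : Set OmegaSG) ⊆ {g : OmegaSG | ⁅g, h⁆ ∈ Ngrp} :=
      closure_minimal (fun y hy => comm_HH y hy h hh) hc
    exact hsub hg
  intro g hg h hh
  have hc : IsClosed {h : OmegaSG | ⁅g, h⁆ ∈ Ngrp} := by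
    have : {h : OmegaSG | ⁅g, h⁆ ∈ Ngrp}
        = (fun h : OmegaSG => g*h*g⁻¹*h⁻¹) ⁻¹' (Ngrp : Set OmegaSG) := by
      ext y; simp [commutatorElement_def]
    rw [this]
    exact IsClosed.preimage
      (((continuous_const.mul continuous_id).mul continuous_const).mul continuous_inv) isClosed_N
  have hsub : (Ggrp : Set OmegaSG) ⊆ {h : OmegaSG | ⁅g, h⁆ ∈ Ngrp} :=
    closure_minimal (fun y hy => L2 y hy g hg) hc
  exact hsub hh

end Stmt6Aux

/-- `β₁ = (a₃a₂⁻¹, a₂a₃⁻¹)`, `β₂ = (a₂⁻¹a₃, a₃⁻¹a₂)`, and the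
closed subgroup `N = ⟨⟨β₁,β₂⟩⟩` is a normal subgroup of `G = ⟨⟨a₁,a₃⟩⟩` equal to the
closure of the commutator subgroup of `G`. -/
theorem stmt6 :
    A1 * A3 * A1 * A3⁻¹ = pairOm (A3 * A2⁻¹) (A2 * A3⁻¹) ∧
    A3⁻¹ * A1 * A3 * A1 = pairOm (A2⁻¹ * A3) (A3⁻¹ * A2) ∧
    Ngrp ≤ Ggrp ∧
    (∀ g ∈ Ggrp, ∀ x ∈ Ngrp, g * x * g⁻¹ ∈ Ngrp) ∧
    Ngrp = (⁅Ggrp, Ggrp⁆).topologicalClosure := by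
  refine ⟨?_, ?_, N_le_G, normal4, le_antisymm ?_ ?_⟩
  · apply Subtype.ext; apply Equiv.ext
    rintro (_ | ⟨(_|_), w⟩) <;> rfl
  · apply Subtype.ext; apply Equiv.ext
    rintro (_ | ⟨(_|_), w⟩) <;> rfl
  · apply Subgroup.topologicalClosure_minimal
    · rw [Subgroup.closure_le]
      rintro y hy
      simp only [Set.mem_insert_iff, Set.mem_singleton_iff] at hy
      rcases hy with rfl | rfl
      · refine Subgroup.le_topologicalClosure _ ?_
        have := Subgroup.commutator_mem_commutator A1_mem_G A3_mem_G
        rwa [commutatorElement_def, hA1i] at this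
      · refine Subgroup.le_topologicalClosure _ ?_
        have := Subgroup.commutator_mem_commutator (inv_mem A3_mem_G) A1_mem_G
        rwa [commutatorElement_def, hA1i, inv_inv] at this
    · exact Subgroup.isClosed_topologicalClosure _
  · apply Subgroup.topologicalClosure_minimal
    · exact Subgroup.commutator_le.2 comm_GG
    · exact isClosed_N
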